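/- arXiv:1604.08195 — 2 statements merged into one kernel-verified Lean document; each statement's English description precedes it below -/
import Mathlib

section
/- For complex numbers x, y with |x| < 1 and y ≠ 0, the Jacobi triple product identity holds: ∑_{n ∈ ℤ} x^(n²/2) y^n = ∏_{n=1}^∞ (1 - x^n)(1 + x^n y)(1 + x^n / y). (Equivalently, with x = w², ∑_{n∈ℤ} w^(n²) y^n = ∏_{n≥1} (1 - w^(2n))(1 + w^(2n-1) y)(1 + w^(2n-1)/y).) -/
open Complex

namespace JTP

open Finset Filter Topology

noncomputable section

/-- Gaussian binomial coefficient as a complex number. -/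
def gb (t : ℂ) : ℕ → ℕ → ℂ
  | _, 0 => 1
  | 0, _+1 => 0
  | N+1, k+1 => gb t N (k+1) + t^(N-k) * gb t N k

/-- partial products of ∏ (1 - t^(i+1)). -/
def B (t : ℂ) (k : ℕ) : ℂ := ∏ i ∈ Finset.range k, (1 - t ^ (i+1))

lemma gb_zero (t : ℂ) : ∀ N k, N < k → gb t N k = 0 := by
  intro N
  induction N with
  | zero => intro k hk; match k, hk with
    | k+1, _ => rfl
  | succ N ih =>
    intro k hk
    match k, hk with
    | k+1, hk =>
      show gb t N (k+1) + t^(N-k) * gb t N k = 0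
      rw [ih _ (by omega), ih _ (by omega)]
      ring

lemma gb_diag (t : ℂ) : ∀ N, gb t N N = 1 := by
  intro N
  induction N with
  | zero => rfl
  | succ N ih =>
    show gb t N (N+1) + t^(N-N) * gb t N N = 1
    rw [ih, gb_zero t N (N+1) (by omega)]
    simp

lemma B_succ (t : ℂ) (k : ℕ) : B t (k+1) = B t k * (1 - t^(k+1)) := Finset.prod_range_succ _ _

lemma gb_mul_B (t : ℂ) : ∀ N k, k ≤ N → gb t N k * (B t k * B t (N - k)) = B t N := by
  intro N
  induction N with
  | zero => intro k hk; interval_cases k; simp [gb, B]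
  | succ N ih =>
    intro k hk
    match k with
    | 0 => show (1:ℂ) * (B t 0 * B t (N+1-0)) = B t (N+1); simp [B]
    | j+1 =>
      show (gb t N (j+1) + t^(N-j) * gb t N j) * (B t (j+1) * B t (N+1-(j+1))) = B t (N+1)
      rcases Nat.lt_or_ge j N with hj | hj
      · -- j+1 ≤ N
        have h1 : N + 1 - (j+1) = (N - (j+1)) + 1 := by omega
        have h2 : N - (j+1) + 1 = N - j := by omega
        have e1 : B t (N+1-(j+1)) = B t (N - (j+1)) * (1 - t^(N-j)) := by
          rw [h1, B_succ, h2]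
        have e2 : B t (j+1) = B t j * (1 - t^(j+1)) := B_succ t j
        have ih1 := ih (j+1) (by omega)
        have ih2 := ih j (by omega)
        have key : t^(N-j) * t^(j+1) = t^(N+1) := by
          rw [← pow_add]; congr 1; omega
        calc (gb t N (j+1) + t^(N-j) * gb t N j) * (B t (j+1) * B t (N+1-(j+1)))
            = gb t N (j+1) * (B t (j+1) * B t (N - (j+1))) * (1 - t^(N-j))
              + t^(N-j) * (gb t N j * (B t j * B t (N-j))) * (1 - t^(j+1)) := by
              have e3 : B t (N - j) = B t (N - (j+1)) * (1 - t^(N-j)) := by rw [← h2, ← B_succ, h2]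
              rw [e1, e2, e3]; ring
          _ = B t N * (1 - t^(N-j)) + t^(N-j) * B t N * (1 - t^(j+1)) := by rw [ih1, ih2]
          _ = B t N * (1 - t^(N+1)) := by rw [← key]; ring
          _ = B t (N+1) := (B_succ t N).symm
      · -- j = N
        have hjN : j = N := by omega
        subst hjN
        rw [gb_zero t j (j+1) (by omega), gb_diag]
        have : j + 1 - (j + 1) = 0 := by omega
        rw [this]
        show (0 + t^(j-j) * 1) * (B t (j+1) * B t 0) = B t (j+1)
        simp [B]

lemma qbinom (t u : ℂ) : ∀ N, ∏ k ∈ range N, (1 + t^k * u)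
    = ∑ j ∈ range (N+1), t^(j.choose 2) * gb t N j * u^j := by
  intro N
  induction N with
  | zero => simp [gb]
  | succ N ih =>
    rw [Finset.prod_range_succ, ih]
    rw [Finset.sum_range_succ' (fun j => t^(j.choose 2) * gb t (N+1) j * u^j) (N+1)]
    have h0 : t^((0:ℕ).choose 2) * gb t (N+1) 0 * u^0 = 1 := by simp [gb]
    rw [h0]
    have hS' : ∑ j ∈ range (N+1), t^(j.choose 2) * gb t N j * u^j
        = ∑ i ∈ range (N+1), t^((i+1).choose 2) * gb t N (i+1) * u^(i+1) + 1 := by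
      have : ∑ j ∈ range (N+2), t^(j.choose 2) * gb t N j * u^j
          = ∑ j ∈ range (N+1), t^(j.choose 2) * gb t N j * u^j := by
        rw [Finset.sum_range_succ, gb_zero t N (N+1) (by omega)]
        ring
      rw [← this, Finset.sum_range_succ' (fun j => t^(j.choose 2) * gb t N j * u^j) (N+1)]
      simp [gb]
    calc (∑ j ∈ range (N+1), t^(j.choose 2) * gb t N j * u^j) * (1 + t^N * u)
        = (∑ j ∈ range (N+1), t^(j.choose 2) * gb t N j * u^j)
          + ∑ j ∈ range (N+1), t^N * u * (t^(j.choose 2) * gb t N j * u^j) := by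
          rw [← Finset.mul_sum]; ring
      _ = (∑ i ∈ range (N+1), t^((i+1).choose 2) * gb t N (i+1) * u^(i+1) + 1)
          + ∑ j ∈ range (N+1), t^N * u * (t^(j.choose 2) * gb t N j * u^j) := by rw [hS']
      _ = ∑ i ∈ range (N+1), t^((i+1).choose 2) * gb t (N+1) (i+1) * u^(i+1) + 1 := by
          rw [add_right_comm]
          congr 1
          rw [← Finset.sum_add_distrib]
          refine Finset.sum_congr rfl fun i hi => ?_
          have hiN : i ≤ N := by simpa using Nat.lt_succ_iff.mp (Finset.mem_range.mp hi)
          show t^((i+1).choose 2) * gb t N (i+1) * u^(i+1) + t^N * u * (t^(i.choose 2) * gb t N i * u^i)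
              = t^((i+1).choose 2) * gb t (N+1) (i+1) * u^(i+1)
          have hgb : gb t (N+1) (i+1) = gb t N (i+1) + t^(N-i) * gb t N i := rfl
          have hpow : t^((i+1).choose 2) * t^(N-i) = t^(i.choose 2) * t^N := by
            rw [← pow_add, ← pow_add]
            congr 1
            have hc : (i+1).choose 2 = i.choose 2 + i := by
              have h := Nat.choose_succ_succ i 1
              simp [Nat.choose_one_right] at h
              omega
            show (i+1).choose 2 + (N-i) = i.choose 2 + N
            omega
          calc t^((i+1).choose 2) * gb t N (i+1) * u^(i+1) + t^N * u * (t^(i.choose 2) * gb t N i * u^i)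
              = t^((i+1).choose 2) * gb t N (i+1) * u^(i+1)
                + (t^(i.choose 2) * t^N) * gb t N i * u^(i+1) := by ring
            _ = t^((i+1).choose 2) * gb t N (i+1) * u^(i+1)
                + (t^((i+1).choose 2) * t^(N-i)) * gb t N i * u^(i+1) := by rw [hpow]
            _ = t^((i+1).choose 2) * (gb t N (i+1) + t^(N-i) * gb t N i) * u^(i+1) := by ring
            _ = _ := by rw [← hgb]

lemma zpow_sum' {x : ℂ} (hx : x ≠ 0) {α : Type*} (s : Finset α) (f : α → ℤ) :
    x ^ (∑ i ∈ s, f i) = ∏ i ∈ s, x ^ f i := by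
  classical
  induction s using Finset.cons_induction with
  | empty => simp
  | cons a s ha ih => rw [Finset.sum_cons, Finset.prod_cons, zpow_add₀ hx, ih]

lemma gauss (m : ℕ) : (∑ k ∈ range m, (k:ℤ)) * 2 = m * ((m:ℤ) - 1) := by
  induction m with
  | zero => simp
  | succ n ih => rw [Finset.sum_range_succ]; push_cast; push_cast at ih; ring_nf; ring_nf at ih; linarith

lemma choose2 (j : ℕ) : 2 * ((j.choose 2 : ℕ) : ℤ) = j * ((j:ℤ) - 1) := by
  induction j with
  | zero => simp
  | succ n ih =>
    have h := Nat.choose_succ_succ n 1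
    have h' : ((n+1).choose 2 : ℤ) = (n.choose 1 : ℤ) + (n.choose 2 : ℤ) := by
      rw [h]; push_cast; ring
    rw [h', Nat.choose_one_right]
    push_cast
    linarith

lemma finite_jtp (q z : ℂ) (hq0 : q ≠ 0) (hz : z ≠ 0) (m : ℕ) :
    ∏ j ∈ range m, ((1 + q^(2*j+1) * z) * (1 + q^(2*j+1) * z⁻¹))
      = ∑ n ∈ Finset.Icc (-(m:ℤ)) m, gb (q^2) (2*m) (m + n).toNat * q ^ (n^2) * z ^ n := by
  have key := qbinom (q^2) (q ^ ((1:ℤ) - 2*m) * z) (2*m)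
  -- rewrite LHS of key
  have hL : ∏ k ∈ range (2*m), (1 + (q^2)^k * (q ^ ((1:ℤ) - 2*m) * z))
      = (q ^ (-(m:ℤ)^2) * z ^ (m:ℤ)) *
        ∏ j ∈ range m, ((1 + q^(2*j+1) * z) * (1 + q^(2*j+1) * z⁻¹)) := by
    have hterm : ∀ k : ℕ, (1 + ((q^2)^k : ℂ) * (q ^ ((1:ℤ) - 2*m) * z))
        = 1 + q ^ (2*(k:ℤ)+1-2*m) * z := by
      intro k
      have h1 : ((q^2)^k : ℂ) = q ^ (((2*k : ℕ) : ℤ)) := by rw [zpow_natCast, pow_mul]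
      have h2 : (((2*k : ℕ) : ℤ)) + (1 - 2*(m:ℤ)) = 2*(k:ℤ)+1-2*m := by push_cast; ring
      rw [h1, ← mul_assoc, ← zpow_add₀ hq0, h2]
    simp only [hterm]
    have hsplit : ∏ k ∈ range (2*m), (1 + q ^ (2*(k:ℤ)+1-2*m) * z)
        = (∏ k ∈ range m, (1 + q ^ (2*(k:ℤ)+1-2*m) * z)) *
          ∏ k ∈ range m, (1 + q ^ (2*(k:ℤ)+1) * z) := by
      rw [two_mul, Finset.prod_range_add]
      congr 1
      refine Finset.prod_congr rfl fun k _ => ?_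
      congr 2
      push_cast; ring
    rw [hsplit]
    -- first factor
    have hfirst : ∏ k ∈ range m, (1 + q ^ (2*(k:ℤ)+1-2*m) * z)
        = (q ^ (-(m:ℤ)^2) * z ^ (m:ℤ)) * ∏ j ∈ range m, (1 + q^(2*j+1) * z⁻¹) := by
      have hterm2 : ∀ k ∈ range m, (1 + q ^ (2*(k:ℤ)+1-2*m) * z)
          = (q ^ (2*(k:ℤ)+1-2*m) * z) * (1 + q^(2*(m-1-k)+1) * z⁻¹) := by
        intro k hk
        have hkm : k < m := Finset.mem_range.mp hk
        have hnat : (q^(2*(m-1-k)+1) : ℂ) = q ^ (-(2*(k:ℤ)+1-2*m)) := by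
          rw [← zpow_natCast q (2*(m-1-k)+1)]
          congr 1
          push_cast [Nat.sub_sub]
          omega
        have hcancel : q ^ (2*(k:ℤ)+1-2*m) * z * (q ^ (-(2*(k:ℤ)+1-2*m)) * z⁻¹) = 1 := by
          rw [mul_mul_mul_comm, ← zpow_add₀ hq0, add_neg_cancel, zpow_zero, one_mul,
            mul_inv_cancel₀ hz]
        rw [hnat, mul_add, mul_one, hcancel, add_comm]
      rw [Finset.prod_congr rfl hterm2, Finset.prod_mul_distrib, Finset.prod_mul_distrib]
      have h1 : ∏ k ∈ range m, q ^ (2*(k:ℤ)+1-2*m) = q ^ (-(m:ℤ)^2) := by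
        rw [← zpow_sum' hq0]
        congr 1
        have hs : ∑ k ∈ range m, (2*(k:ℤ)+1-2*m) = 2 * (∑ k ∈ range m, (k:ℤ)) + m - 2*m^2 := by
          rw [Finset.sum_sub_distrib, Finset.sum_add_distrib, ← Finset.mul_sum]
          simp
          ring
        rw [hs]
        linear_combination gauss m
      rw [h1, Finset.prod_const, Finset.card_range,
        Finset.prod_range_reflect (fun j => 1 + q^(2*j+1) * z⁻¹) m, zpow_natCast]
    rw [hfirst]
    have hterm3 : ∀ k:ℕ, (q ^ (2*(k:ℤ)+1) : ℂ) = q^(2*k+1) := by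
      intro k; rw [← zpow_natCast q (2*k+1)]; congr 1; try (push_cast; ring)
    simp only [hterm3]
    rw [Finset.prod_mul_distrib]
    ring
  -- rewrite RHS of key termwise
  have hR : ∀ j ∈ range (2*m+1),
      (q^2)^(j.choose 2) * gb (q^2) (2*m) j * (q ^ ((1:ℤ) - 2*m) * z)^j
      = (q ^ (-(m:ℤ)^2) * z ^ (m:ℤ)) *
        (gb (q^2) (2*m) ((m + ((j:ℤ) - m)).toNat) * q ^ (((j:ℤ)-m)^2) * z ^ ((j:ℤ)-m)) := by
    intro j hj
    have hidx : ((m:ℤ) + ((j:ℤ) - m)).toNat = j := by omega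
    rw [hidx]
    have e1 : ((q^2 : ℂ))^(j.choose 2) = q ^ (((2*(j.choose 2) : ℕ) : ℤ)) := by
      rw [zpow_natCast, pow_mul]
    have e2 : (q ^ ((1:ℤ)-2*m) * z)^j = q ^ (((1:ℤ)-2*m)*j) * z ^ (j:ℤ) := by
      rw [mul_pow, ← zpow_natCast (q ^ ((1:ℤ)-2*m)) j, ← zpow_mul, zpow_natCast z j]
    rw [e1, e2]
    have e3 : (q : ℂ) ^ (((2*(j.choose 2) : ℕ) : ℤ)) * q ^ (((1:ℤ)-2*m)*j)
        = q ^ (-(m:ℤ)^2) * q ^ (((j:ℤ)-m)^2) := by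
      rw [← zpow_add₀ hq0, ← zpow_add₀ hq0]
      congr 1
      have := choose2 j
      push_cast
      push_cast at this
      linear_combination this
    have e4 : (z : ℂ) ^ (j:ℤ) = z ^ (m:ℤ) * z ^ ((j:ℤ)-m) := by
      rw [← zpow_add₀ hz]
      congr 1
      ring
    calc q ^ (((2*(j.choose 2) : ℕ) : ℤ)) * gb (q^2) (2*m) j * (q ^ (((1:ℤ)-2*m)*j) * z ^ (j:ℤ))
        = (q ^ (((2*(j.choose 2) : ℕ) : ℤ)) * q ^ (((1:ℤ)-2*m)*j)) * z ^ (j:ℤ) * gb (q^2) (2*m) j := by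
          ring
      _ = (q ^ (-(m:ℤ)^2) * q ^ (((j:ℤ)-m)^2)) * (z ^ (m:ℤ) * z ^ ((j:ℤ)-m)) * gb (q^2) (2*m) j := by
          rw [e3, e4]
      _ = _ := by ring
  rw [Finset.sum_congr rfl hR, ← Finset.mul_sum] at key
  rw [hL] at key
  have hc : (q ^ (-(m:ℤ)^2) * z ^ (m:ℤ)) ≠ 0 :=
    mul_ne_zero (zpow_ne_zero _ hq0) (zpow_ne_zero _ hz)
  have key2 := mul_left_cancel₀ hc key
  rw [key2]
  -- reindex
  refine Finset.sum_nbij' (i := fun (j : ℕ) => (j:ℤ) - m) (j := fun (n : ℤ) => ((m:ℤ)+n).toNat)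
    ?_ ?_ ?_ ?_ ?_
  · intro a ha; simp only [Finset.mem_range] at ha; simp only [Finset.mem_Icc]; omega
  · intro n hn; simp only [Finset.mem_Icc] at hn; simp only [Finset.mem_range]; omega
  · intro a ha; simp only [Finset.mem_range] at ha
    show ((m:ℤ) + ((a:ℤ) - m)).toNat = a; omega
  · intro n hn; simp only [Finset.mem_Icc] at hn
    show ((((m:ℤ) + n).toNat : ℕ) : ℤ) - m = n; omega
  · intro a ha; rfl

-- general: summable a → multipliable (1 + a ·)
lemma multipliable_one_add (a : ℕ → ℂ) (ha : Summable a) :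
    Multipliable (fun n => 1 + a n) := by
  have h0 : Tendsto a atTop (𝓝 0) := ha.tendsto_atTop_zero
  obtain ⟨J, hJ⟩ : ∃ J, ∀ j ≥ J, ‖a j‖ ≤ 1/2 := by
    have := (h0.eventually (Metric.ball_mem_nhds (0:ℂ) (by norm_num : (0:ℝ) < 1/2)))
    rw [eventually_atTop] at this
    obtain ⟨J, hJ⟩ := this
    exact ⟨J, fun j hj => by
      have := hJ j hj
      simp only [Metric.mem_ball, dist_zero_right] at this
      linarith⟩
  apply Multipliable.comp_nat_add (k := J)
  have hne : ∀ n : ℕ, (1 : ℂ) + a (n + J) ≠ 0 := by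
    intro n h
    have h1 : a (n + J) = -1 := by linear_combination h
    have := hJ (n + J) (by omega)
    rw [h1] at this
    norm_num at this
  have hlog : Summable (fun n => Complex.log (1 + a (n + J))) := by
    apply Summable.of_norm_bounded (g := fun n => 3/2 * ‖a (n + J)‖)
    · exact ((summable_nat_add_iff J).mpr ha).norm.mul_left _
    · intro n
      exact Complex.norm_log_one_add_half_le_self (hJ (n + J) (by omega))
  exact Complex.multipliable_of_summable_log hlog

lemma summable_geom_aux {c : ℂ} (hc : ‖c‖ < 1) (d : ℂ) :
    Summable (fun n : ℕ => c ^ (n+1) * d) := by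
  apply Summable.mul_right
  exact (summable_geometric_of_norm_lt_one hc).comp_injective (add_left_injective 1)

variable {t : ℂ}

lemma one_sub_pow_ne (ht : ‖t‖ < 1) (i : ℕ) : (1 : ℂ) - t ^ (i+1) ≠ 0 := by
  intro h
  have h1 : t ^ (i+1) = 1 := by linear_combination -h
  have : ‖t ^ (i+1)‖ < 1 := by
    rw [norm_pow]
    exact pow_lt_one₀ (norm_nonneg t) ht (by omega)
  rw [h1] at this
  norm_num at this

lemma hlog_one_sub (ht : ‖t‖ < 1) :
    Summable (fun i : ℕ => Complex.log (1 - t ^ (i+1))) := by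
  have h0 : Tendsto (fun i : ℕ => t ^ (i+1)) atTop (𝓝 0) := by
    have := tendsto_pow_atTop_nhds_zero_of_norm_lt_one ht
    exact this.comp (tendsto_add_atTop_nat 1)
  apply Summable.of_norm_bounded_eventually_nat (g := fun i => 3/2 * ‖t ^ (i+1)‖)
  · apply Summable.mul_left
    rw [show (fun i : ℕ => ‖t ^ (i+1)‖) = fun i => ‖t‖ ^ (i+1) by funext i; rw [norm_pow]]
    exact (summable_geometric_of_lt_one (norm_nonneg t) ht).comp_injective
      (add_left_injective 1)
  · have : ∀ᶠ i in atTop, ‖t ^ (i+1)‖ ≤ 1/2 := by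
      have := h0.eventually (Metric.ball_mem_nhds (0:ℂ) (by norm_num : (0:ℝ) < 1/2))
      filter_upwards [this] with i hi
      simp only [Metric.mem_ball, dist_zero_right] at hi
      linarith
    filter_upwards [this] with i hi
    have : (1:ℂ) - t^(i+1) = 1 + (-(t^(i+1))) := by ring
    rw [this]
    have := Complex.norm_log_one_add_half_le_self (z := -(t^(i+1))) (by rwa [norm_neg])
    rwa [norm_neg] at this

lemma mult_one_sub (ht : ‖t‖ < 1) : Multipliable (fun i : ℕ => 1 - t ^ (i+1)) := by
  have := Complex.multipliable_of_summable_log (hlog_one_sub ht)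
  exact this

lemma P_ne_zero (ht : ‖t‖ < 1) : (∏' i : ℕ, (1 - t ^ (i+1))) ≠ 0 := by
  have h := Complex.cexp_tsum_eq_tprod (f := fun i : ℕ => 1 - t ^ (i+1))
    (fun i => one_sub_pow_ne ht i) (hlog_one_sub ht)
  rw [← h]
  exact Complex.exp_ne_zero _

lemma B_tendsto (ht : ‖t‖ < 1) :
    Tendsto (fun k => B t k) atTop (𝓝 (∏' i : ℕ, (1 - t ^ (i+1)))) :=
  (mult_one_sub ht).hasProd.tendsto_prod_nat

variable {t : ℂ}

lemma geom_sum_le (ht : ‖t‖ < 1) (k : ℕ) :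
    ∑ i ∈ range k, ‖t‖ ^ (i+1) ≤ ‖t‖ * (1 - ‖t‖)⁻¹ := by
  have hsummable : Summable (fun i : ℕ => ‖t‖ ^ (i+1)) :=
    (summable_geometric_of_lt_one (norm_nonneg t) ht).comp_injective (add_left_injective 1)
  have h1 : ∑ i ∈ range k, ‖t‖ ^ (i+1) ≤ ∑' i : ℕ, ‖t‖ ^ (i+1) :=
    Summable.sum_le_tsum _ (fun i _ => by positivity) hsummable
  have h2 : ∑' i : ℕ, ‖t‖ ^ (i+1) = ‖t‖ * (1 - ‖t‖)⁻¹ := by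
    have : ∀ i : ℕ, ‖t‖ ^ (i+1) = ‖t‖ * ‖t‖ ^ i := fun i => by ring
    rw [tsum_congr this, tsum_mul_left, tsum_geometric_of_lt_one (norm_nonneg t) ht]
  linarith [h1, h2.le, h2.ge]

lemma B_norm_le (ht : ‖t‖ < 1) (k : ℕ) : ‖B t k‖ ≤ Real.exp (‖t‖ * (1-‖t‖)⁻¹) := by
  rw [B, norm_prod]
  calc ∏ i ∈ range k, ‖1 - t^(i+1)‖
      ≤ ∏ i ∈ range k, Real.exp (‖t‖^(i+1)) := by
        apply Finset.prod_le_prod (fun i _ => norm_nonneg _)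
        intro i _
        calc ‖1 - t^(i+1)‖ ≤ ‖(1:ℂ)‖ + ‖t^(i+1)‖ := norm_sub_le _ _
          _ = 1 + ‖t‖^(i+1) := by rw [norm_one, norm_pow]
          _ ≤ Real.exp (‖t‖^(i+1)) := by
              have := Real.add_one_le_exp (‖t‖^(i+1)); linarith
    _ = Real.exp (∑ i ∈ range k, ‖t‖^(i+1)) := (Real.exp_sum _ _).symm
    _ ≤ Real.exp (‖t‖ * (1-‖t‖)⁻¹) := Real.exp_le_exp.mpr (geom_sum_le ht k)

lemma exp_le_one_sub (ht : ‖t‖ < 1) {x : ℝ} (hx0 : 0 ≤ x) (hx : x ≤ ‖t‖) :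
    Real.exp (-(x * (1-‖t‖)⁻¹)) ≤ 1 - x := by
  set r := ‖t‖ with hr
  have hr0 : 0 ≤ r := norm_nonneg t
  have h1r : 0 < 1 - r := by linarith
  set y := x * (1-r)⁻¹ with hy
  have hy0 : 0 ≤ y := by positivity
  have h1 : Real.exp (-y) ≤ (1+y)⁻¹ := by
    rw [Real.exp_neg]
    apply inv_anti₀ (by linarith)
    linarith [Real.add_one_le_exp y]
  apply le_trans h1
  have hyx : y * (1-r) = x := by
    rw [hy]; field_simp
  rw [inv_le_iff_one_le_mul₀ (by linarith : (0:ℝ) < 1 + y)]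
  nlinarith [hyx, mul_nonneg hy0 (sub_nonneg.2 hx)]

lemma B_norm_ge (ht : ‖t‖ < 1) (k : ℕ) :
    Real.exp (-(‖t‖ * ((1-‖t‖)⁻¹)^2)) ≤ ‖B t k‖ := by
  set r := ‖t‖ with hr
  have hr0 : 0 ≤ r := norm_nonneg t
  have h1r : 0 < 1 - r := by linarith
  rw [B, norm_prod]
  calc Real.exp (-(r * ((1-r)⁻¹)^2))
      ≤ Real.exp (-(∑ i ∈ range k, r^(i+1)) * (1-r)⁻¹) := by
        apply Real.exp_le_exp.mpr
        have h := geom_sum_le ht k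
        have : 0 < (1-r)⁻¹ := by positivity
        nlinarith [h]
    _ = ∏ i ∈ range k, Real.exp (-(r^(i+1) * (1-r)⁻¹)) := by
        rw [← Real.exp_sum]
        congr 1
        rw [neg_mul, Finset.sum_mul, ← Finset.sum_neg_distrib]
    _ ≤ ∏ i ∈ range k, ‖1 - t^(i+1)‖ := by
        apply Finset.prod_le_prod (fun i _ => (Real.exp_pos _).le)
        intro i _
        have hx0 : (0:ℝ) ≤ r^(i+1) := by positivity
        have hx : r^(i+1) ≤ r := by
          calc r^(i+1) ≤ r^1 := pow_le_pow_of_le_one hr0 ht.le (by omega)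
            _ = r := pow_one r
        calc Real.exp (-(r^(i+1) * (1-r)⁻¹)) ≤ 1 - r^(i+1) := exp_le_one_sub ht hx0 hx
          _ = ‖(1:ℂ)‖ - ‖t^(i+1)‖ := by rw [norm_one, norm_pow]
          _ ≤ ‖1 - t^(i+1)‖ := norm_sub_norm_le _ _

lemma B_ne_zero (ht : ‖t‖ < 1) (k : ℕ) : B t k ≠ 0 :=
  Finset.prod_ne_zero_iff.mpr (fun i _ => one_sub_pow_ne ht i)

noncomputable def Cb (t : ℂ) : ℝ :=
  Real.exp (‖t‖ * (1-‖t‖)⁻¹) * Real.exp (‖t‖ * ((1-‖t‖)⁻¹)^2) * Real.exp (‖t‖ * ((1-‖t‖)⁻¹)^2)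

lemma gb_eq_div (ht : ‖t‖ < 1) {N k : ℕ} (hk : k ≤ N) :
    gb t N k = B t N * (B t k)⁻¹ * (B t (N-k))⁻¹ := by
  have h := gb_mul_B t N k hk
  field_simp [B_ne_zero ht]
  linear_combination h

lemma gb_norm_le (ht : ‖t‖ < 1) (N k : ℕ) : ‖gb t N k‖ ≤ Cb t := by
  rcases le_or_gt k N with hk | hk
  · rw [gb_eq_div ht hk, Cb]
    rw [norm_mul, norm_mul, norm_inv, norm_inv]
    have e1 := B_norm_le ht N
    have e2 := B_norm_ge ht k
    have e3 := B_norm_ge ht (N - k)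
    have p2 : (0:ℝ) < Real.exp (-(‖t‖ * ((1-‖t‖)⁻¹)^2)) := Real.exp_pos _
    have i2 : ‖B t k‖⁻¹ ≤ Real.exp (‖t‖ * ((1-‖t‖)⁻¹)^2) := by
      have h := inv_anti₀ p2 e2
      rwa [Real.exp_neg, inv_inv] at h
    have i3 : ‖B t (N-k)‖⁻¹ ≤ Real.exp (‖t‖ * ((1-‖t‖)⁻¹)^2) := by
      have h := inv_anti₀ p2 e3
      rwa [Real.exp_neg, inv_inv] at h
    have hBn : 0 ≤ ‖B t N‖ := norm_nonneg _
    have hBk : 0 ≤ ‖B t k‖⁻¹ := by positivity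
    have hBnk : 0 ≤ ‖B t (N-k)‖⁻¹ := by positivity
    exact mul_le_mul (mul_le_mul e1 i2 hBk (by positivity)) i3 hBnk (by positivity)
  · rw [gb_zero t N k hk]
    simp only [norm_zero, Cb]
    positivity

lemma gb_tendsto (ht : ‖t‖ < 1) (n : ℤ) :
    Tendsto (fun m : ℕ => gb t (2*m) (((m:ℤ) + n).toNat)) atTop
      (𝓝 (∏' i : ℕ, (1 - t ^ (i+1)))⁻¹) := by
  set P := ∏' i : ℕ, (1 - t ^ (i+1)) with hP
  have hPne := P_ne_zero ht
  have h2m : Tendsto (fun m : ℕ => 2*m) atTop atTop :=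
    tendsto_atTop_atTop.2 fun b => ⟨b, fun m hm => by omega⟩
  have hk : Tendsto (fun m : ℕ => ((m:ℤ) + n).toNat) atTop atTop :=
    tendsto_atTop_atTop.2 fun b => ⟨b + n.natAbs, fun m hm => by omega⟩
  have hk' : Tendsto (fun m : ℕ => ((m:ℤ) - n).toNat) atTop atTop :=
    tendsto_atTop_atTop.2 fun b => ⟨b + n.natAbs, fun m hm => by omega⟩
  have hlim : Tendsto (fun m : ℕ => B t (2*m) * (B t (((m:ℤ)+n).toNat))⁻¹
      * (B t (((m:ℤ)-n).toNat))⁻¹) atTop (𝓝 (P * P⁻¹ * P⁻¹)) := by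
    exact (((B_tendsto ht).comp h2m).mul (((B_tendsto ht).comp hk).inv₀ hPne)).mul
      (((B_tendsto ht).comp hk').inv₀ hPne)
  have heq : P * P⁻¹ * P⁻¹ = P⁻¹ := by field_simp
  rw [heq] at hlim
  apply hlim.congr'
  filter_upwards [eventually_ge_atTop n.natAbs] with m hm
  have hle : ((m:ℤ) + n).toNat ≤ 2*m := by omega
  have hsub : 2*m - ((m:ℤ) + n).toNat = ((m:ℤ) - n).toNat := by omega
  rw [← hsub]
  exact (gb_eq_div ht hle).symm

lemma Cb_nonneg (t : ℂ) : 0 ≤ Cb t := by rw [Cb]; positivity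

lemma summable_qpow {q : ℂ} (hq : ‖q‖ < 1) (c : ℂ) :
    Summable (fun j : ℕ => q^(2*j+1) * c) := by
  have hq2 : ‖q‖^2 < 1 := by nlinarith [norm_nonneg q]
  apply Summable.of_norm_bounded (g := fun j => (‖q‖^2)^j * (‖q‖ * ‖c‖))
  · exact (summable_geometric_of_lt_one (by positivity) hq2).mul_right _
  · intro j
    rw [norm_mul, norm_pow]
    rw [show 2*j+1 = j*2+1 by omega, pow_succ' , pow_mul]
    rw [← pow_mul]
    ring_nf
    apply le_of_eq
    ring
    
lemma norm_zpow_core {q z : ℂ} (hq0 : q ≠ 0) (hz : z ≠ 0) (n : ℤ) :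
    ‖q ^ (n^2) * z ^ n‖ ≤ ‖q‖^(n.natAbs^2) * (max ‖z‖ ‖z⁻¹‖)^(n.natAbs) := by
  set M := max ‖z‖ ‖z⁻¹‖ with hM
  have hq2 : (q : ℂ) ^ ((n:ℤ)^2) = q ^ (n.natAbs^2 : ℕ) := by
    rw [← zpow_natCast q (n.natAbs^2)]
    congr 1
    push_cast
    rw [_root_.sq_abs]
  rw [norm_mul, hq2, norm_pow]
  apply mul_le_mul_of_nonneg_left ?_ (by positivity)
  obtain ⟨k, rfl | rfl⟩ := Int.eq_nat_or_neg n
  · rw [zpow_natCast, norm_pow, Int.natAbs_natCast]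
    exact pow_le_pow_left₀ (norm_nonneg z) (le_max_left _ _) k
  · rw [zpow_neg, zpow_natCast, norm_inv, norm_pow, ← inv_pow, ← norm_inv, Int.natAbs_neg,
      Int.natAbs_natCast]
    exact pow_le_pow_left₀ (norm_nonneg _) (le_max_right _ _) k

lemma summable_bound {q : ℂ} (hq : ‖q‖ < 1) (M : ℝ) (hM : 0 ≤ M) (C : ℝ) :
    Summable (fun n : ℤ => C * (‖q‖^(n.natAbs^2) * M^(n.natAbs))) := by
  apply Summable.mul_left
  have key : Summable (fun k : ℕ => ‖q‖^(k^2) * M^k) := by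
    apply Summable.of_norm_bounded_eventually_nat (g := fun k => (1/2)^k)
    · exact summable_geometric_two
    · have h0 : Tendsto (fun k : ℕ => ‖q‖^k * M) atTop (𝓝 0) := by
        simpa using (tendsto_pow_atTop_nhds_zero_of_norm_lt_one
          (by rwa [Real.norm_of_nonneg (norm_nonneg q)]) : Tendsto (fun k:ℕ => ‖q‖^k) atTop (𝓝 0)).mul_const M
      have h1 : ∀ᶠ k in atTop, ‖q‖^k * M ≤ 1/2 := by
        have := h0.eventually (eventually_le_nhds (by norm_num : (0:ℝ) < 1/2))
        exact this
      filter_upwards [h1] with k hk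
      have hterm : ‖q‖^(k^2) * M^k = (‖q‖^k * M)^k := by
        rw [mul_pow, ← pow_mul, pow_two]
      rw [Real.norm_of_nonneg (by positivity), hterm]
      exact pow_le_pow_left₀ (by positivity) hk k
  apply Summable.of_nat_of_neg
  · simpa [Int.natAbs_natCast] using key
  · simpa [Int.natAbs_natCast] using key

lemma main {q z : ℂ} (hq : ‖q‖ < 1) (hq0 : q ≠ 0) (hz : z ≠ 0) :
    ∑' n : ℤ, q ^ (n^2) * z ^ n
      = (∏' i : ℕ, (1 - (q^2) ^ (i+1)))
        * ∏' j : ℕ, ((1 + q^(2*j+1) * z) * (1 + q^(2*j+1) * z⁻¹)) := by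
  have ht : ‖(q^2 : ℂ)‖ < 1 := by
    rw [norm_pow]; nlinarith [norm_nonneg q]
  set P := ∏' i : ℕ, (1 - (q^2) ^ (i+1)) with hPdef
  have hPne : P ≠ 0 := P_ne_zero ht
  set M := max ‖z‖ ‖z⁻¹‖ with hM
  have hM0 : 0 ≤ M := le_trans (norm_nonneg z) (le_max_left _ _)
  set f : ℕ → ℤ → ℂ := fun m n =>
    if n ∈ Finset.Icc (-(m:ℤ)) (m:ℤ) then gb (q^2) (2*m) ((m + n).toNat) * q ^ (n^2) * z ^ n
    else 0 with hf
  -- Tannery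
  have tannery : Tendsto (fun m => ∑' n : ℤ, f m n) atTop
      (𝓝 (∑' n : ℤ, P⁻¹ * (q ^ (n^2) * z ^ n))) := by
    apply tendsto_tsum_of_dominated_convergence
      (bound := fun n : ℤ => Cb (q^2) * (‖q‖^(n.natAbs^2) * M^(n.natAbs)))
      (summable_bound hq M hM0 _)
    · intro n
      have hev : ∀ᶠ m in atTop, f m n
          = gb (q^2) (2*m) (((m:ℤ) + n).toNat) * q ^ (n^2) * z ^ n := by
        filter_upwards [eventually_ge_atTop n.natAbs] with m hm
        rw [hf]
        simp only
        rw [if_pos (by simp only [Finset.mem_Icc]; omega)]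
      have hlim : Tendsto (fun m => gb (q^2) (2*m) (((m:ℤ) + n).toNat) * q ^ (n^2) * z ^ n)
          atTop (𝓝 (P⁻¹ * (q ^ (n^2) * z ^ n))) := by
        have h1 := ((gb_tendsto ht n).mul_const (q ^ (n^2 : ℤ))).mul_const (z ^ n)
        simpa [mul_assoc] using h1
      exact hlim.congr' (hev.mono fun m hm => hm.symm)
    · apply Filter.Eventually.of_forall
      intro m n
      rw [hf]
      simp only
      split_ifs with hn
      · rw [mul_assoc, norm_mul]
        exact mul_le_mul (gb_norm_le ht _ _) (norm_zpow_core hq0 hz n) (norm_nonneg _)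
          (Cb_nonneg _)
      · rw [norm_zero]
        exact mul_nonneg (Cb_nonneg _) (by positivity)
  -- tsum f m = finite product
  have hfin : ∀ m : ℕ, ∑' n : ℤ, f m n
      = ∏ j ∈ range m, ((1 + q^(2*j+1) * z) * (1 + q^(2*j+1) * z⁻¹)) := by
    intro m
    rw [finite_jtp q z hq0 hz m]
    rw [tsum_eq_sum (s := Finset.Icc (-(m:ℤ)) (m:ℤ))
      (fun n hn => by rw [hf]; simp only; rw [if_neg hn])]
    refine Finset.sum_congr rfl fun n hn => ?_
    rw [hf]; simp only; rw [if_pos hn]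
  -- multipliability of the double product
  have hmul : Multipliable (fun j : ℕ => (1 + q^(2*j+1) * z) * (1 + q^(2*j+1) * z⁻¹)) :=
    (multipliable_one_add _ (summable_qpow hq z)).mul
      (multipliable_one_add _ (summable_qpow hq z⁻¹))
  have hprod : Tendsto (fun m => ∏ j ∈ range m, ((1 + q^(2*j+1) * z) * (1 + q^(2*j+1) * z⁻¹)))
      atTop (𝓝 (∏' j : ℕ, ((1 + q^(2*j+1) * z) * (1 + q^(2*j+1) * z⁻¹)))) :=
    hmul.hasProd.tendsto_prod_nat
  have huniq : ∑' n : ℤ, P⁻¹ * (q ^ (n^2) * z ^ n)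
      = ∏' j : ℕ, ((1 + q^(2*j+1) * z) * (1 + q^(2*j+1) * z⁻¹)) := by
    apply tendsto_nhds_unique _ hprod
    apply tannery.congr
    intro m
    exact hfin m
  rw [tsum_mul_left] at huniq
  rw [← huniq, ← mul_assoc, mul_inv_cancel₀ hPne, one_mul]

end
end JTP

open Finset Filter Topology JTP in
/-- Jacobi triple product identity: with `x = w ^ 2`, `|w| < 1`, `y ≠ 0`,
`∑_{n ∈ ℤ} w^(n²) y^n = ∏_{n ≥ 1} (1 - w^(2n))(1 + w^(2n-1) y)(1 + w^(2n-1)/y)`. -/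
theorem jacobi_triple_product (w y : ℂ) (hw : ‖w‖ < 1) (hy : y ≠ 0) :
    ∑' n : ℤ, w ^ (n ^ 2) * y ^ n =
      ∏' n : ℕ, (1 - w ^ (2 * (n + 1))) * (1 + w ^ (2 * (n + 1) - 1) * y) *
        (1 + w ^ (2 * (n + 1) - 1) / y) := by
  rcases eq_or_ne w 0 with rfl | hw0
  · have hL : ∑' n : ℤ, (0:ℂ) ^ (n ^ 2) * y ^ n = 1 := by
      rw [tsum_eq_single 0]
      · norm_num
      · intro n hn
        rw [zero_zpow _ (pow_ne_zero 2 hn), zero_mul]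
    rw [hL]
    have hR : ∀ n : ℕ, (1 - (0:ℂ) ^ (2 * (n + 1))) * (1 + (0:ℂ) ^ (2 * (n + 1) - 1) * y) *
        (1 + (0:ℂ) ^ (2 * (n + 1) - 1) / y) = 1 := by
      intro n
      rw [zero_pow (by omega), zero_pow (by omega)]
      simp
    rw [tprod_congr hR, tprod_one]
  · have hw1 : ‖w‖ < 1 := hw
    have ht : ‖(w^2 : ℂ)‖ < 1 := by rw [norm_pow]; nlinarith [norm_nonneg w]
    have hbody : ∀ n : ℕ, (1 - w ^ (2 * (n + 1))) * (1 + w ^ (2 * (n + 1) - 1) * y) *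
        (1 + w ^ (2 * (n + 1) - 1) / y)
        = (1 - (w^2) ^ (n+1)) * ((1 + w^(2*n+1) * y) * (1 + w^(2*n+1) * y⁻¹)) := by
      intro n
      rw [div_eq_mul_inv, pow_mul, show 2 * (n + 1) - 1 = 2*n+1 from by omega, mul_assoc]
    rw [tprod_congr hbody,
      Multipliable.tprod_mul (mult_one_sub ht)
        ((multipliable_one_add _ (summable_qpow hw1 y)).mul
          (multipliable_one_add _ (summable_qpow hw1 y⁻¹)))]
    exact main hw1 hw0 hy
end

section
/- For every positive integer N: if the 2-adic valuation v₂(N) of N is even, then ∑_{d | N, d odd} χ₃(d) = ∑_{d | N} χ₃(d) and ∑_{d | N, N/d odd} χ₃(d) = ∑_{d | N} χ₃(d); if v₂(N) is odd, then ∑_{d | N, d odd} χ₃(d) = ∑_{d | N/2} χ₃(d) and ∑_{d | N, N/d odd} χ₃(d) = -∑_{d | N/2} χ₃(d). -/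
/-- The Legendre symbol mod 3. -/
def chiThree (d : ℕ) : ℤ := if d % 3 = 1 then 1 else if d % 3 = 2 then -1 else 0

lemma chiThree_mul (a b : ℕ) : chiThree (a * b) = chiThree a * chiThree b := by
  unfold chiThree
  rw [Nat.mul_mod]
  have ha : a % 3 < 3 := Nat.mod_lt _ (by norm_num)
  have hb : b % 3 < 3 := Nat.mod_lt _ (by norm_num)
  set x := a % 3; set y := b % 3
  interval_cases x <;> interval_cases y <;> decide

lemma chiThree_two_pow (a : ℕ) : chiThree (2 ^ a) = (-1) ^ a := by
  induction a with
  | zero => decide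
  | succ n ih => rw [pow_succ, chiThree_mul, ih, pow_succ]; norm_num [chiThree]

open ArithmeticFunction in
/-- `chiThree` as an arithmetic function. -/
noncomputable def chiF : ArithmeticFunction ℤ := ⟨chiThree, by decide⟩

open ArithmeticFunction in
lemma chiF_mult : chiF.IsMultiplicative :=
  ⟨by decide, fun {m n} _ => chiThree_mul m n⟩

open ArithmeticFunction in
lemma sum_chiThree_mul_coprime {m n : ℕ} (h : m.Coprime n) :
    ∑ d ∈ (m * n).divisors, chiThree d =
      (∑ d ∈ m.divisors, chiThree d) * ∑ d ∈ n.divisors, chiThree d := by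
  have hmul := (isMultiplicative_zeta.natCast.mul chiF_mult).map_mul_of_coprime h
  simp only [coe_zeta_mul_apply] at hmul
  exact hmul

lemma sum_chiThree_two_pow (a : ℕ) :
    ∑ d ∈ (2 ^ a).divisors, chiThree d = if Even a then 1 else 0 := by
  rw [Nat.sum_divisors_prime_pow Nat.prime_two]
  have : ∀ x ∈ Finset.range (a + 1), chiThree (2 ^ x) = (-1 : ℤ) ^ x :=
    fun x _ => chiThree_two_pow x
  rw [Finset.sum_congr rfl this, neg_one_geom_sum]
  by_cases h : Even a <;> simp [h, Nat.even_add_one]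

/-- Behaviour of restricted divisor sums of `χ₃` according to the parity of `v₂(N)`. -/
theorem chiThree_restricted_divisor_sums (N : ℕ) (hN : 0 < N) :
    (Even (padicValNat 2 N) →
      (∑ d ∈ N.divisors.filter (fun d => Odd d), chiThree d =
          ∑ d ∈ N.divisors, chiThree d) ∧
        ∑ d ∈ N.divisors.filter (fun d => Odd (N / d)), chiThree d =
          ∑ d ∈ N.divisors, chiThree d) ∧
    (Odd (padicValNat 2 N) →
      (∑ d ∈ N.divisors.filter (fun d => Odd d), chiThree d =
          ∑ d ∈ (N / 2).divisors, chiThree d) ∧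
        ∑ d ∈ N.divisors.filter (fun d => Odd (N / d)), chiThree d =
          -∑ d ∈ (N / 2).divisors, chiThree d) := by
  have hN0 : N ≠ 0 := hN.ne'
  set a := padicValNat 2 N with ha
  set m := N / 2 ^ a with hm
  have hNfac : 2 ^ a * m = N := Nat.ordProj_mul_ordCompl_eq_self N 2
  have hm0 : m ≠ 0 := (Nat.ordCompl_pos 2 hN0).ne'
  have hmodd : ¬ 2 ∣ m := Nat.not_dvd_ordCompl Nat.prime_two hN0
  have hmOdd : Odd m := Nat.odd_iff.mpr (Nat.two_dvd_ne_zero.mp hmodd)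
  have hcop : (2 ^ a).Coprime m :=
    Nat.Coprime.pow_left _ ((Nat.prime_two.coprime_iff_not_dvd).mpr hmodd)
  -- odd divisors of N are exactly divisors of m
  have hfilter : N.divisors.filter (fun d => Odd d) = m.divisors := by
    ext d
    simp only [Finset.mem_filter, Nat.mem_divisors]
    constructor
    · rintro ⟨⟨hd, -⟩, hdo⟩
      rw [← hNfac] at hd
      have hcd : Nat.Coprime d (2 ^ a) := Nat.Coprime.pow_right _
        (Nat.coprime_comm.mp ((Nat.prime_two.coprime_iff_not_dvd).mpr
          (by rw [Nat.odd_iff] at hdo; omega)))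
      exact ⟨Nat.Coprime.dvd_of_dvd_mul_left hcd hd, hm0⟩
    · rintro ⟨hd, -⟩
      have h2d : ¬ 2 ∣ d := fun h2 => hmodd (h2.trans hd)
      exact ⟨⟨hd.trans (Dvd.intro_left _ hNfac), hN0⟩,
        Nat.odd_iff.mpr (Nat.two_dvd_ne_zero.mp h2d)⟩
  -- total sum
  have hsumN : ∑ d ∈ N.divisors, chiThree d =
      (if Even a then 1 else 0) * ∑ d ∈ m.divisors, chiThree d := by
    rw [← hNfac, sum_chiThree_mul_coprime hcop, sum_chiThree_two_pow]
  -- the co-odd sum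
  have hco : ∑ d ∈ N.divisors.filter (fun d => Odd (N / d)), chiThree d =
      (-1 : ℤ) ^ a * ∑ d ∈ m.divisors, chiThree d := by
    have hbij : ∑ d ∈ N.divisors.filter (fun d => Odd (N / d)), chiThree d =
        ∑ e ∈ N.divisors.filter (fun d => Odd d), chiThree (N / e) := by
      refine Finset.sum_nbij' (fun d => N / d) (fun e => N / e) ?_ ?_ ?_ ?_ ?_
      · intro d hd
        simp only [Finset.mem_filter, Nat.mem_divisors] at hd ⊢
        exact ⟨⟨Nat.div_dvd_of_dvd hd.1.1, hN0⟩, hd.2⟩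
      · intro e he
        simp only [Finset.mem_filter, Nat.mem_divisors] at he ⊢
        refine ⟨⟨Nat.div_dvd_of_dvd he.1.1, hN0⟩, ?_⟩
        rw [Nat.div_div_self he.1.1 hN0]
        exact he.2
      · intro d hd
        simp only [Finset.mem_filter, Nat.mem_divisors] at hd
        exact Nat.div_div_self hd.1.1 hN0
      · intro e he
        simp only [Finset.mem_filter, Nat.mem_divisors] at he
        exact Nat.div_div_self he.1.1 hN0
      · intro d hd
        simp only [Finset.mem_filter, Nat.mem_divisors] at hd
        rw [Nat.div_div_self hd.1.1 hN0]
    rw [hbij, hfilter]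
    have hstep : ∀ e ∈ m.divisors, chiThree (N / e) = (-1 : ℤ) ^ a * chiThree (m / e) := by
      intro e he
      rw [Nat.mem_divisors] at he
      have : N / e = 2 ^ a * (m / e) := by
        rw [← hNfac, Nat.mul_div_assoc _ he.1]
      rw [this, chiThree_mul, chiThree_two_pow]
    rw [Finset.sum_congr rfl hstep, ← Finset.mul_sum, Nat.sum_div_divisors]
  constructor
  · intro hEven
    have hfull : ∑ d ∈ N.divisors, chiThree d = ∑ d ∈ m.divisors, chiThree d := by
      rw [hsumN, if_pos hEven, one_mul]
    refine ⟨by rw [hfilter, hfull], ?_⟩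
    rw [hco, hfull, Even.neg_one_pow hEven, one_mul]
  · intro hOdd
    have ha1 : 1 ≤ a := hOdd.pos
    have hhalf : N / 2 = 2 ^ (a - 1) * m := by
      have : N = 2 * (2 ^ (a - 1) * m) := by
        rw [← hNfac, ← mul_assoc, ← pow_succ']
        congr 2
        omega
      omega
    have hEven' : Even (a - 1) := by
      rcases hOdd with ⟨k, hk⟩
      exact ⟨k, by omega⟩
    have hNhalf : ∑ d ∈ (N / 2).divisors, chiThree d = ∑ d ∈ m.divisors, chiThree d := by
      rw [hhalf, sum_chiThree_mul_coprime
        (Nat.Coprime.pow_left _ ((Nat.prime_two.coprime_iff_not_dvd).mpr hmodd)),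
        sum_chiThree_two_pow, if_pos hEven', one_mul]
    refine ⟨by rw [hfilter, hNhalf], ?_⟩
    rw [hco, hNhalf, Odd.neg_one_pow hOdd, neg_one_mul]
end
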